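/- Let H be a disjoint union of at least two paths, with longest and second longest components of orders n_1(H) and n_2(H). Then the longest cycle of K_2 + H has exactly n_1(H) + n_2(H) + 2 vertices; moreover K_2 + H contains a cycle of every length i with 3 \leq i \leq n_1(H) + n_2(H) + 2. -/

import Mathlib

open Set SimpleGraph

attribute [local instance] Classical.propDecidable

/-- A topological plane embedding of a simple graph: vertices are points in the
plane, edges are injective arcs meeting only at common endpoints. -/
structure PlaneEmbedding {V : Type*} (G : SimpleGraph V) where
  pos : V → ℝ × ℝ
  pos_inj : Function.Injective pos
  arc : ∀ {u v : V}, G.Adj u v → Path (pos u) (pos v)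
  arc_inj : ∀ {u v : V} (h : G.Adj u v), Function.Injective (arc h)
  arc_symm : ∀ {u v : V} (h : G.Adj u v),
    Set.range (arc h.symm) = Set.range (arc h)
  arc_avoid : ∀ {u v : V} (h : G.Adj u v) (w : V),
    pos w ∈ Set.range (arc h) → w = u ∨ w = v
  arc_meet : ∀ {u v a b : V} (h₁ : G.Adj u v) (h₂ : G.Adj a b),
    s(u, v) ≠ s(a, b) →
    Set.range (arc h₁) ∩ Set.range (arc h₂) ⊆
      ({pos u, pos v} : Set (ℝ × ℝ)) ∩ {pos a, pos b}

/-- The point set of the drawing. -/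
def PlaneEmbedding.image {V : Type*} {G : SimpleGraph V} (emb : PlaneEmbedding G) :
    Set (ℝ × ℝ) :=
  (⋃ (u : V) (v : V) (h : G.Adj u v), Set.range (emb.arc h)) ∪ Set.range emb.pos

/-- A graph is planar if it admits a plane embedding. -/
def SimpleGraph.IsPlanar {V : Type*} (G : SimpleGraph V) : Prop :=
  Nonempty (PlaneEmbedding G)

/-- A graph is outerplanar if it has a plane embedding with all vertices on the
boundary of the unbounded face. -/
def SimpleGraph.IsOuterplanar {V : Type*} (G : SimpleGraph V) : Prop :=
  ∃ emb : PlaneEmbedding G, ∃ U : Set (ℝ × ℝ),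
    U ⊆ emb.imageᶜ ∧ IsConnected U ∧ ¬ Bornology.IsBounded U ∧
    ∀ v : V, emb.pos v ∈ closure U

/-- The join `G + H` of two graphs. -/
def graphJoin {α β : Type*} (G : SimpleGraph α) (H : SimpleGraph β) :
    SimpleGraph (α ⊕ β) where
  Adj x y :=
    (∃ a b, x = Sum.inl a ∧ y = Sum.inl b ∧ G.Adj a b) ∨
    (∃ a b, x = Sum.inr a ∧ y = Sum.inr b ∧ H.Adj a b) ∨
    (x.isLeft ∧ y.isRight) ∨ (x.isRight ∧ y.isLeft)
  symm := by
    constructor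
    rintro x y (⟨a, b, rfl, rfl, h⟩ | ⟨a, b, rfl, rfl, h⟩ | ⟨h1, h2⟩ | ⟨h1, h2⟩)
    · exact Or.inl ⟨b, a, rfl, rfl, h.symm⟩
    · exact Or.inr (Or.inl ⟨b, a, rfl, rfl, h.symm⟩)
    · exact Or.inr (Or.inr (Or.inr ⟨h2, h1⟩))
    · exact Or.inr (Or.inr (Or.inl ⟨h2, h1⟩))
  loopless := by
    constructor
    rintro x (⟨a, b, rfl, h, hadj⟩ | ⟨a, b, rfl, h, hadj⟩ | ⟨h1, h2⟩ | ⟨h1, h2⟩)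
    · cases h; exact G.irrefl hadj
    · cases h; exact H.irrefl hadj
    · cases x <;> simp_all
    · cases x <;> simp_all

/-- Disjoint union of paths `P_{k 0} ∪ P_{k 1} ∪ ⋯`. -/
def pathsUnion {t : ℕ} (k : Fin t → ℕ) : SimpleGraph (Σ i : Fin t, Fin (k i)) where
  Adj x y := ∃ (i : Fin t) (a b : Fin (k i)),
    x = ⟨i, a⟩ ∧ y = ⟨i, b⟩ ∧ (pathGraph (k i)).Adj a b
  symm := by
    constructor
    rintro x y ⟨i, a, b, rfl, rfl, h⟩
    exact ⟨i, b, a, rfl, rfl, h.symm⟩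
  loopless := by
    constructor
    rintro x ⟨i, a, b, rfl, h2, hadj⟩
    obtain rfl : a = b := by simpa using h2
    exact (pathGraph (k i)).irrefl hadj

/-- `G` contains two vertex-disjoint cycles. -/
def HasTwoDisjointCycles {V : Type*} (G : SimpleGraph V) : Prop :=
  ∃ (a b : V) (c₁ : G.Walk a a) (c₂ : G.Walk b b),
    c₁.IsCycle ∧ c₂.IsCycle ∧ c₁.support.Disjoint c₂.support

/-- `G` contains two vertex-disjoint cycles of length `ℓ` each. -/
def HasTwoDisjointCyclesLen {V : Type*} (G : SimpleGraph V) (ℓ : ℕ) : Prop :=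
  ∃ (a b : V) (c₁ : G.Walk a a) (c₂ : G.Walk b b),
    c₁.IsCycle ∧ c₁.length = ℓ ∧ c₂.IsCycle ∧ c₂.length = ℓ ∧
    c₁.support.Disjoint c₂.support

/-- `G` contains a cycle of length `ℓ`. -/
def HasCycleLen {V : Type*} (G : SimpleGraph V) (ℓ : ℕ) : Prop :=
  ∃ (a : V) (c : G.Walk a a), c.IsCycle ∧ c.length = ℓ

/-- Combinatorial face structure on a plane graph: faces, incidence between
edges and faces (each edge on at least one and at most two faces), and face
sizes. -/
structure PlaneFaceStructure {V : Type*} (G : SimpleGraph V) where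
  F : Type
  fintypeF : Fintype F
  inc : Sym2 V → F → Prop
  inc_edge : ∀ e f, inc e f → e ∈ G.edgeSet
  face_exists : ∀ e ∈ G.edgeSet, ∃ f, inc e f
  le_two : ∀ e : Sym2 V, {f | inc e f}.ncard ≤ 2
  size : F → ℕ
  size_eq : ∀ f, size f = {e | inc e f}.ncard

section AuxGeneric

variable {V : Type*} {G : SimpleGraph V}

def walkOfChain : ∀ (l : List V) (v w : V), List.Chain G.Adj v (l ++ [w]) → G.Walk v w
  | [], v, w, h => SimpleGraph.Walk.cons (List.isChain_pair.mp h) SimpleGraph.Walk.nil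
  | x :: xs, v, w, h =>
    SimpleGraph.Walk.cons (List.isChain_cons_cons.mp h).1 (walkOfChain xs x w (List.isChain_cons_cons.mp h).2)

lemma walkOfChain_support : ∀ (l : List V) (v w : V) (h : List.Chain G.Adj v (l ++ [w])),
    (walkOfChain l v w h).support = v :: (l ++ [w])
  | [], v, w, h => by simp [walkOfChain]
  | x :: xs, v, w, h => by simp [walkOfChain, walkOfChain_support xs x w (List.isChain_cons_cons.mp h).2]

lemma walkOfChain_length : ∀ (l : List V) (v w : V) (h : List.Chain G.Adj v (l ++ [w])),
    (walkOfChain l v w h).length = l.length + 1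
  | [], v, w, h => by simp [walkOfChain]
  | x :: xs, v, w, h => by simp [walkOfChain, walkOfChain_length xs x w (List.isChain_cons_cons.mp h).2]

lemma hasCycleLen_of_list (v : V) (l : List V)
    (hc : List.Chain G.Adj v (l ++ [v])) (hnd : (v :: l).Nodup) (hl : 2 ≤ l.length) :
    HasCycleLen G (l.length + 1) := by
  rcases l.eq_nil_or_concat with rfl | ⟨m, w, rfl⟩
  · simp at hl
  · rw [List.concat_eq_append] at hc hnd hl ⊢
    rw [List.append_assoc] at hc
    have hc' := List.isChain_cons_split.mp hc
    have hadj : G.Adj w v := List.isChain_pair.mp hc'.2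
    set p := walkOfChain m v w hc'.1 with hp
    have hsupp : p.support = v :: (m ++ [w]) := walkOfChain_support m v w hc'.1
    have hpath : p.IsPath := by
      rw [SimpleGraph.Walk.isPath_def, hsupp]
      simpa using hnd
    have hedge : s(w, v) ∉ p.edges := by
      intro hmem
      rcases m with _ | ⟨x, m'⟩
      · simp at hl
      · have hpc : p = SimpleGraph.Walk.cons (List.isChain_cons_cons.mp hc'.1).1
            (walkOfChain m' x w (List.isChain_cons_cons.mp hc'.1).2) := rfl
        rw [hpc, SimpleGraph.Walk.edges_cons] at hmem
        rcases List.mem_cons.mp hmem with heq | hmem'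
        · rw [Sym2.eq_iff] at heq
          have hnd1 : v ∉ ((x :: m') ++ [w]) := (List.nodup_cons.mp hnd).1
          have hnd2 : x ∉ (m' ++ [w]) :=
            (List.nodup_cons.mp (by simpa using (List.nodup_cons.mp hnd).2)).1
          rcases heq with ⟨hwv, -⟩ | ⟨hwx, -⟩
          · exact hnd1 (by rw [← hwv]; simp)
          · exact hnd2 (by rw [← hwx]; simp)
        · have hv : v ∈ (walkOfChain m' x w (List.isChain_cons_cons.mp hc'.1).2).support :=
            SimpleGraph.Walk.snd_mem_support_of_mem_edges _ hmem'
          rw [walkOfChain_support m' x w (List.isChain_cons_cons.mp hc'.1).2] at hv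
          have : v ∉ (x :: (m' ++ [w])) := by
            have := (List.nodup_cons.mp hnd).1
            simpa using this
          exact this hv
    refine ⟨w, SimpleGraph.Walk.cons hadj p, ?_, ?_⟩
    · exact (SimpleGraph.Walk.cons_isCycle_iff p hadj).mpr ⟨hpath, hedge⟩
    · simp [walkOfChain_length m v w hc'.1, hp]

lemma chain_to_last (f : ℕ → V) (w : V) :
    ∀ (m s : ℕ), (∀ j, s ≤ j → j + 1 ≤ s + m → G.Adj (f j) (f (j+1))) →
      G.Adj (f (s+m)) w → List.Chain G.Adj (f s) ((List.range' (s+1) m).map f ++ [w])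
  | 0, s, _, hw => by simpa using (show List.Chain G.Adj (f s) [w] from List.isChain_pair.mpr (by simpa using hw))
  | m+1, s, hadj, hw => by
    rw [List.range'_succ]
    simp only [List.map_cons, List.cons_append]
    exact List.Chain.cons (hadj s le_rfl (by omega)) (chain_to_last f w m (s+1)
      (fun j h1 h2 => hadj j (by omega) (by omega))
      (by rw [show s+1+m = s+(m+1) by omega]; exact hw))

end AuxGeneric

section AuxJoin

open Sum

variable {t : ℕ} {k : Fin t → ℕ}

abbrev JK (k : Fin t → ℕ) : SimpleGraph (Fin 2 ⊕ Σ i : Fin t, Fin (k i)) :=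
  graphJoin (⊤ : SimpleGraph (Fin 2)) (pathsUnion k)

lemma adj_lr (z : Fin 2) (p : Σ i : Fin t, Fin (k i)) : (JK k).Adj (inl z) (inr p) :=
  Or.inr (Or.inr (Or.inl ⟨rfl, rfl⟩))

lemma adj_rl (p : Σ i : Fin t, Fin (k i)) (z : Fin 2) : (JK k).Adj (inr p) (inl z) :=
  Or.inr (Or.inr (Or.inr ⟨rfl, rfl⟩))

lemma adj_ll {z w : Fin 2} (h : z ≠ w) : (JK k).Adj (inl z) (inl w) :=
  Or.inl ⟨z, w, rfl, rfl, by simpa using h⟩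

lemma adj_rr {i : Fin t} {x y : Fin (k i)} (h : (pathGraph (k i)).Adj x y) :
    (JK k).Adj (inr ⟨i, x⟩) (inr ⟨i, y⟩) :=
  Or.inr (Or.inl ⟨⟨i, x⟩, ⟨i, y⟩, rfl, rfl, ⟨i, x, y, rfl, rfl, h⟩⟩)

lemma comp_eq_of_adj {i j : Fin t} {x : Fin (k i)} {y : Fin (k j)}
    (h : (JK k).Adj (inr ⟨i, x⟩) (inr ⟨j, y⟩)) : i = j := by
  rcases h with ⟨a, b, h1, -, -⟩ | ⟨a, b, h1, h2, h3⟩ | ⟨h1, -⟩ | ⟨-, h2⟩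
  · exact absurd h1 (by simp)
  · obtain ⟨i', a', b', ha, hb, -⟩ := h3
    rw [ha] at h1; rw [hb] at h2
    simp only [Sum.inr.injEq] at h1 h2
    exact (congrArg Sigma.fst h1).trans (congrArg Sigma.fst h2).symm
  · simp at h1
  · simp at h2

lemma sep_aux {l : List (Fin 2 ⊕ Σ i : Fin t, Fin (k i))}
    (hch : List.Chain' (JK k).Adj l) :
    ∀ (d p q : ℕ) (hd : q = p + d + 1) (hq : q < l.length), ∀ (i : Fin t) (x : Fin (k i))
      (j : Fin t) (y : Fin (k j)),
      l.get ⟨p, by omega⟩ = inr ⟨i, x⟩ → l.get ⟨q, hq⟩ = inr ⟨j, y⟩ → i ≠ j →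
      ∃ (r : ℕ) (hr : r < l.length) (z : Fin 2), p < r ∧ r < q ∧ l.get ⟨r, hr⟩ = inl z := by
  intro d
  induction d with
  | zero =>
    intro p q hd hql i x j y hp' hq' hij
    subst hd
    have h1 : (JK k).Adj (l.get ⟨p, by omega⟩) (l.get ⟨p + 1, by omega⟩) :=
      List.isChain_iff_getElem.mp hch p (by omega)
    rw [hp', hq'] at h1
    exact absurd (comp_eq_of_adj h1) hij
  | succ d ih =>
    intro p q hd hql i x j y hp' hq' hij
    have hp1 : p + 1 < l.length := by omega
    rcases hmid : l.get ⟨p + 1, hp1⟩ with z | ⟨i', x'⟩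
    · exact ⟨p + 1, hp1, z, by omega, by omega, hmid⟩
    · have h1 : (JK k).Adj (l.get ⟨p, by omega⟩) (l.get ⟨p + 1, by omega⟩) :=
        List.isChain_iff_getElem.mp hch p (by omega)
      rw [hp', hmid] at h1
      have hii' : i = i' := comp_eq_of_adj h1
      obtain ⟨r, hr, z, h2, h3, h4⟩ := ih (p + 1) q (by omega) (by omega) i' x' j y hmid hq'
        (by rw [← hii']; exact hij)
      exact ⟨r, hr, z, by omega, h3, h4⟩

lemma exists_inl_of_two_comps {l : List (Fin 2 ⊕ Σ i : Fin t, Fin (k i))}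
    (hch : List.Chain' (JK k).Adj l)
    {i j : Fin t} {x : Fin (k i)} {y : Fin (k j)}
    (hi : inr ⟨i, x⟩ ∈ l) (hj : inr ⟨j, y⟩ ∈ l) (hij : i ≠ j) :
    ∃ z : Fin 2, inl z ∈ l := by
  obtain ⟨⟨p, hp⟩, hp'⟩ := List.mem_iff_get.mp hi
  obtain ⟨⟨q, hq⟩, hq'⟩ := List.mem_iff_get.mp hj
  rcases Nat.lt_trichotomy p q with h | h | h
  · obtain ⟨r, hr, z, -, -, hz⟩ := sep_aux hch (q - p - 1) p q (by omega) hq i x j y hp' hq' hij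
    exact ⟨z, hz ▸ l.get_mem ⟨r, hr⟩⟩
  · subst h
    rw [hp'] at hq'
    simp only [Sum.inr.injEq] at hq'
    exact absurd (congrArg Sigma.fst hq') hij
  · obtain ⟨r, hr, z, -, -, hz⟩ := sep_aux hch (p - q - 1) q p (by omega) hp j y i x hq' hp' hij.symm
    exact ⟨z, hz ▸ l.get_mem ⟨r, hr⟩⟩

lemma no_three {l : List (Fin 2 ⊕ Σ i : Fin t, Fin (k i))}
    (hch : List.Chain' (JK k).Adj l) (hnd : l.Nodup)
    (hne : l ≠ []) {zz : Fin 2} (hlast : l.getLast hne = inl zz) :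
    ∀ (p q r : ℕ) (hp : p < l.length) (hq : q < l.length) (hr : r < l.length),
      p < q → q < r →
      ∀ (i : Fin t) (x : Fin (k i)) (j : Fin t) (y : Fin (k j)) (i' : Fin t) (x' : Fin (k i')),
        l.get ⟨p, hp⟩ = inr ⟨i, x⟩ → l.get ⟨q, hq⟩ = inr ⟨j, y⟩ →
        l.get ⟨r, hr⟩ = inr ⟨i', x'⟩ → i ≠ j → j ≠ i' → i ≠ i' → False := by
  intro p q r hp hq hr hpq hqr i x j y i' x' hgp hgq hgr h1 h2 h3
  obtain ⟨s₁, hs₁, z₁, hps₁, hs₁q, hz₁⟩ :=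
    sep_aux hch (q - p - 1) p q (by omega) hq i x j y hgp hgq h1
  obtain ⟨s₂, hs₂, z₂, hqs₂, hs₂r, hz₂⟩ :=
    sep_aux hch (r - q - 1) q r (by omega) hr j y i' x' hgq hgr h2
  have hlast' : l.get ⟨l.length - 1, by omega⟩ = inl zz := by
    rw [List.get_eq_getElem, ← List.getLast_eq_getElem hne]; exact hlast
  have hrlt : r < l.length - 1 := by
    rcases Nat.lt_or_ge r (l.length - 1) with h | h
    · exact h
    · exfalso
      have : r = l.length - 1 := by omega
      subst this
      rw [hgr] at hlast'
      simp at hlast'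
  have inj := List.nodup_iff_injective_get.mp hnd
  have d12 : z₁ ≠ z₂ := by
    intro h
    have : (⟨s₁, hs₁⟩ : Fin l.length) = ⟨s₂, hs₂⟩ :=
      inj (by rw [hz₁, hz₂, h])
    simp only [Fin.mk.injEq] at this
    omega
  have d1z : z₁ ≠ zz := by
    intro h
    have : (⟨s₁, hs₁⟩ : Fin l.length) = ⟨l.length - 1, by omega⟩ :=
      inj (by rw [hz₁, hlast', h])
    simp only [Fin.mk.injEq] at this
    omega
  have d2z : z₂ ≠ zz := by
    intro h
    have : (⟨s₂, hs₂⟩ : Fin l.length) = ⟨l.length - 1, by omega⟩ :=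
      inj (by rw [hz₂, hlast', h])
    simp only [Fin.mk.injEq] at this
    omega
  have e1 : z₁.val ≠ z₂.val := fun h => d12 (Fin.ext h)
  have e2 : z₁.val ≠ zz.val := fun h => d1z (Fin.ext h)
  have e3 : z₂.val ≠ zz.val := fun h => d2z (Fin.ext h)
  have := z₁.isLt; have := z₂.isLt; have := zz.isLt
  omega

end AuxJoin

set_option maxHeartbeats 1000000 in
/-- For `H` a disjoint union of at least two paths with longest components of
orders `n₁ ≥ n₂`: `K₂ + H` contains a cycle of every length `3 ≤ i ≤ n₁ + n₂ + 2`,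
and its longest cycle has exactly `n₁ + n₂ + 2` vertices. -/
theorem join_longest_cycle (t : ℕ) (ht : 2 ≤ t) (k : Fin t → ℕ)
    (hk1 : ∀ i, 1 ≤ k i) (hanti : ∀ i j : Fin t, i ≤ j → k j ≤ k i)
    (n₁ n₂ : ℕ) (h₁ : n₁ = k ⟨0, by omega⟩) (h₂ : n₂ = k ⟨1, by omega⟩) :
    (∀ i : ℕ, 3 ≤ i → i ≤ n₁ + n₂ + 2 →
      HasCycleLen (graphJoin (⊤ : SimpleGraph (Fin 2)) (pathsUnion k)) i) ∧
    IsGreatest {m : ℕ |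
      HasCycleLen (graphJoin (⊤ : SimpleGraph (Fin 2)) (pathsUnion k)) m}
      (n₁ + n₂ + 2) := by
  have hn1 : 1 ≤ n₁ := h₁ ▸ hk1 _
  have hn2 : 1 ≤ n₂ := h₂ ▸ hk1 _
  have partA : ∀ i : ℕ, 3 ≤ i → i ≤ n₁ + n₂ + 2 →
      HasCycleLen (graphJoin (⊤ : SimpleGraph (Fin 2)) (pathsUnion k)) i := by
    intro i hi3 hile
    set a := min (i - 2) n₁ with ha
    set b := i - 2 - a with hb
    have ha1 : 1 ≤ a := by omega
    have hak : a ≤ k ⟨0, by omega⟩ := by rw [← h₁]; omega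
    have hbk : b ≤ k ⟨1, by omega⟩ := by rw [← h₂]; omega
    set fA : ℕ → (Fin 2 ⊕ Σ i : Fin t, Fin (k i)) :=
      fun j => Sum.inr ⟨⟨0, by omega⟩, ⟨j % k ⟨0, by omega⟩, Nat.mod_lt _ (hk1 _)⟩⟩ with hfA
    set fB : ℕ → (Fin 2 ⊕ Σ i : Fin t, Fin (k i)) :=
      fun j => Sum.inr ⟨⟨1, by omega⟩, ⟨j % k ⟨1, by omega⟩, Nat.mod_lt _ (hk1 _)⟩⟩ with hfB
    set A := (List.range' 0 a).map fA with hA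
    set B := (List.range' 0 b).map fB with hB
    set l := A ++ Sum.inl (1 : Fin 2) :: B with hl
    have hchain : List.Chain (JK k).Adj (Sum.inl 0) (l ++ [Sum.inl 0]) := by
      have hsplit : l ++ [Sum.inl (0 : Fin 2)]
          = A ++ Sum.inl (1 : Fin 2) :: (B ++ [Sum.inl 0]) := by simp [hl]
      rw [hsplit]
      refine List.isChain_cons_split.mpr ⟨?_, ?_⟩
      · have hA' : A = fA 0 :: (List.range' 1 (a - 1)).map fA := by
          rw [hA, show a = (a - 1) + 1 from by omega, List.range'_succ, List.map_cons]
          simp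
        rw [hA', List.cons_append]
        refine List.Chain.cons (by rw [hfA]; exact adj_lr _ _) ?_
        have hadjA : ∀ j, 0 ≤ j → j + 1 ≤ 0 + (a - 1) → (JK k).Adj (fA j) (fA (j + 1)) := by
          intro j _ hj
          rw [hfA]
          have e1 : j % k ⟨0, by omega⟩ = j := Nat.mod_eq_of_lt (by omega)
          have e2 : (j + 1) % k ⟨0, by omega⟩ = j + 1 := Nat.mod_eq_of_lt (by omega)
          exact adj_rr (pathGraph_adj.mpr (Or.inl (by simp [e1, e2])))
        have hendA : (JK k).Adj (fA (0 + (a - 1))) (Sum.inl 1) := by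
          rw [hfA]; exact adj_rl _ _
        have hchA := chain_to_last (G := JK k) fA (Sum.inl 1) (a - 1) 0 hadjA hendA
        simpa using hchA
      · rcases Nat.eq_zero_or_pos b with hb0 | hbpos
        · rw [hB, hb0]
          simp only [List.range'_zero, List.map_nil, List.nil_append]
          exact List.isChain_pair.mpr (adj_ll (by decide))
        · have hB' : B = fB 0 :: (List.range' 1 (b - 1)).map fB := by
            rw [hB, show b = (b - 1) + 1 from by omega, List.range'_succ, List.map_cons]
            simp
          rw [hB', List.cons_append]
          refine List.Chain.cons (by rw [hfB]; exact adj_lr _ _) ?_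
          have hadjB : ∀ j, 0 ≤ j → j + 1 ≤ 0 + (b - 1) → (JK k).Adj (fB j) (fB (j + 1)) := by
            intro j _ hj
            rw [hfB]
            have e1 : j % k ⟨1, by omega⟩ = j := Nat.mod_eq_of_lt (by omega)
            have e2 : (j + 1) % k ⟨1, by omega⟩ = j + 1 := Nat.mod_eq_of_lt (by omega)
            exact adj_rr (pathGraph_adj.mpr (Or.inl (by simp [e1, e2])))
          have hendB : (JK k).Adj (fB (0 + (b - 1))) (Sum.inl 0) := by
            rw [hfB]; exact adj_rl _ _
          have hchB := chain_to_last (G := JK k) fB (Sum.inl 0) (b - 1) 0 hadjB hendB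
          simpa using hchB
    have hAnodup : A.Nodup := by
      rw [hA]
      refine List.Nodup.map_on ?_ List.nodup_range'
      intro x hx y hy hxy
      simp only [List.mem_range'_1] at hx hy
      rw [hfA] at hxy
      have hxy' : x % k ⟨0, by omega⟩ = y % k ⟨0, by omega⟩ := by
        have := congrArg (fun u : Fin 2 ⊕ Σ i : Fin t, Fin (k i) =>
          (Sum.elim (fun _ => (0 : ℕ)) (fun p => (p.2 : ℕ)) u)) hxy
        simpa using this
      have e1 : x % k ⟨0, by omega⟩ = x := Nat.mod_eq_of_lt (by omega)
      have e2 : y % k ⟨0, by omega⟩ = y := Nat.mod_eq_of_lt (by omega)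
      omega
    have hBnodup : B.Nodup := by
      rw [hB]
      refine List.Nodup.map_on ?_ List.nodup_range'
      intro x hx y hy hxy
      simp only [List.mem_range'_1] at hx hy
      rw [hfB] at hxy
      have hxy' : x % k ⟨1, by omega⟩ = y % k ⟨1, by omega⟩ := by
        have := congrArg (fun u : Fin 2 ⊕ Σ i : Fin t, Fin (k i) =>
          (Sum.elim (fun _ => (0 : ℕ)) (fun p => (p.2 : ℕ)) u)) hxy
        simpa using this
      have e1 : x % k ⟨1, by omega⟩ = x := Nat.mod_eq_of_lt (by omega)
      have e2 : y % k ⟨1, by omega⟩ = y := Nat.mod_eq_of_lt (by omega)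
      omega
    have hmemA : ∀ u ∈ A, ∃ x : Fin (k ⟨0, by omega⟩), u = Sum.inr ⟨⟨0, by omega⟩, x⟩ := by
      intro u hu
      rw [hA] at hu
      obtain ⟨j, -, rfl⟩ := List.mem_map.mp hu
      rw [hfA]
      exact ⟨_, rfl⟩
    have hmemB : ∀ u ∈ B, ∃ x : Fin (k ⟨1, by omega⟩), u = Sum.inr ⟨⟨1, by omega⟩, x⟩ := by
      intro u hu
      rw [hB] at hu
      obtain ⟨j, -, rfl⟩ := List.mem_map.mp hu
      rw [hfB]
      exact ⟨_, rfl⟩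
    have hnodup : (Sum.inl (0 : Fin 2) :: l).Nodup := by
      rw [hl]
      refine List.nodup_cons.mpr ⟨?_, ?_⟩
      · intro hmem
        rcases List.mem_append.mp hmem with hmem | hmem
        · obtain ⟨x, hx⟩ := hmemA _ hmem; simp at hx
        · rcases List.mem_cons.mp hmem with hx | hx
          · simp at hx
          · obtain ⟨x, hx⟩ := hmemB _ hx; simp at hx
      · refine List.Nodup.append hAnodup ?_ ?_
        · refine List.nodup_cons.mpr ⟨?_, hBnodup⟩
          intro hmem
          obtain ⟨x, hx⟩ := hmemB _ hmem; simp at hx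
        · intro u huA huB
          obtain ⟨x, hx⟩ := hmemA _ huA
          rcases List.mem_cons.mp huB with hy | hy
          · rw [hx] at hy; simp at hy
          · obtain ⟨y, hy'⟩ := hmemB _ hy
            rw [hx] at hy'
            simp only [Sum.inr.injEq] at hy'
            have := congrArg (fun s : Σ i : Fin t, Fin (k i) => (s.1 : ℕ)) hy'
            simp at this
    have hlenl : l.length = a + 1 + b := by
      rw [hl, hA, hB]
      simp only [List.length_append, List.length_cons, List.length_map, List.length_range']
      omega
    have hcyc := hasCycleLen_of_list (G := JK k) (Sum.inl 0) l hchain hnodup (by omega)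
    have hi : l.length + 1 = i := by omega
    rw [hi] at hcyc
    exact hcyc
  have partB : ∀ m : ℕ,
      HasCycleLen (graphJoin (⊤ : SimpleGraph (Fin 2)) (pathsUnion k)) m →
      m ≤ n₁ + n₂ + 2 := by
    rintro m ⟨v0, c, hc, rfl⟩
    rcases Classical.em (∃ z : Fin 2, (Sum.inl z : Fin 2 ⊕ Σ i : Fin t, Fin (k i)) ∈ c.support) with hinl | hinl
    · obtain ⟨z, hz⟩ := hinl
      have hc' : (c.rotate _ hz).IsCycle := hc.rotate hz
      set c' := c.rotate _ hz with hc'def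
      have hlenrot : c'.length = c.length := by
        have h1 := (SimpleGraph.Walk.support_rotate c _ hz).perm.length_eq
        rw [← hc'def] at h1
        have l1 := SimpleGraph.Walk.length_support c'
        have l2 := SimpleGraph.Walk.length_support c
        have t1 := List.length_tail (l := c'.support)
        have t2 := List.length_tail (l := c.support)
        omega
      set L := c'.support.tail with hLdef
      have hndL : L.Nodup := hc'.support_nodup
      have hchL : List.Chain' (JK k).Adj L := (SimpleGraph.Walk.isChain_adj_support c').tail
      have hlenL : L.length = c'.length := by
        rw [hLdef, List.length_tail, SimpleGraph.Walk.length_support]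
        omega
      have h3le := hc'.three_le_length
      have hneL : L ≠ [] := by
        intro h; rw [h] at hlenL; simp at hlenL; omega
      have hsupc' : c'.support = Sum.inl z :: L := c'.support_eq_cons
      have hlastL : L.getLast hneL = Sum.inl z := by
        have e1 : c'.support.getLast? = some (Sum.inl z) := by
          rw [List.getLast?_eq_getLast (SimpleGraph.Walk.support_ne_nil _),
            SimpleGraph.Walk.getLast_support]
        rw [hsupc'] at e1
        rw [List.getLast?_eq_getLast (List.cons_ne_nil _ _), List.getLast_cons hneL] at e1
        exact Option.some.inj e1
      have hthree : ∀ (j1 j2 j3 : Fin t) (x1 : Fin (k j1)) (x2 : Fin (k j2)) (x3 : Fin (k j3)),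
          Sum.inr ⟨j1, x1⟩ ∈ L → Sum.inr ⟨j2, x2⟩ ∈ L → Sum.inr ⟨j3, x3⟩ ∈ L →
          j1 ≠ j2 → j2 ≠ j3 → j1 ≠ j3 → False := by
        have sorted := no_three hchL hndL hneL hlastL
        intro j1 j2 j3 x1 x2 x3 m1 m2 m3 d12 d23 d13
        obtain ⟨⟨p1, hp1⟩, g1⟩ := List.mem_iff_get.mp m1
        obtain ⟨⟨p2, hp2⟩, g2⟩ := List.mem_iff_get.mp m2
        obtain ⟨⟨p3, hp3⟩, g3⟩ := List.mem_iff_get.mp m3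
        have ne12 : p1 ≠ p2 := by
          rintro rfl; rw [g1] at g2; exact d12 (congrArg Sigma.fst (Sum.inr.inj g2))
        have ne13 : p1 ≠ p3 := by
          rintro rfl; rw [g1] at g3; exact d13 (congrArg Sigma.fst (Sum.inr.inj g3))
        have ne23 : p2 ≠ p3 := by
          rintro rfl; rw [g2] at g3; exact d23 (congrArg Sigma.fst (Sum.inr.inj g3))
        rcases Nat.lt_trichotomy p1 p2 with h12 | h12 | h12
        · rcases Nat.lt_trichotomy p2 p3 with h23 | h23 | h23
          · exact sorted p1 p2 p3 hp1 hp2 hp3 h12 h23 j1 x1 j2 x2 j3 x3 g1 g2 g3 d12 d23 d13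
          · exact ne23 h23
          · rcases Nat.lt_trichotomy p1 p3 with h13 | h13 | h13
            · exact sorted p1 p3 p2 hp1 hp3 hp2 h13 h23 j1 x1 j3 x3 j2 x2 g1 g3 g2 d13 d23.symm d12
            · exact ne13 h13
            · exact sorted p3 p1 p2 hp3 hp1 hp2 h13 h12 j3 x3 j1 x1 j2 x2 g3 g1 g2 d13.symm d12 d23.symm
        · exact ne12 h12
        · rcases Nat.lt_trichotomy p1 p3 with h13 | h13 | h13
          · exact sorted p2 p1 p3 hp2 hp1 hp3 h12 h13 j2 x2 j1 x1 j3 x3 g2 g1 g3 d12.symm d13 d23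
          · exact ne13 h13
          · rcases Nat.lt_trichotomy p2 p3 with h23 | h23 | h23
            · exact sorted p2 p3 p1 hp2 hp3 hp1 h23 h13 j2 x2 j3 x3 j1 x1 g2 g3 g1 d23 d13.symm d12.symm
            · exact ne23 h23
            · exact sorted p3 p2 p1 hp3 hp2 hp1 h23 h12 j3 x3 j2 x2 j1 x1 g3 g2 g1 d23.symm d12.symm d13.symm
      have key : ∃ (i0' i1' : Fin t), (i0' : ℕ) < (i1' : ℕ) ∧
          ∀ (j : Fin t) (x : Fin (k j)), Sum.inr ⟨j, x⟩ ∈ L → j = i0' ∨ j = i1' := by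
        rcases Classical.em (∃ (j1 j2 : Fin t) (x1 : Fin (k j1)) (x2 : Fin (k j2)),
            Sum.inr ⟨j1, x1⟩ ∈ L ∧ Sum.inr ⟨j2, x2⟩ ∈ L ∧ j1 ≠ j2) with h2 | h2
        · obtain ⟨j1, j2, x1, x2, m1, m2, hne⟩ := h2
          have main : ∀ (j1 j2 : Fin t) (x1 : Fin (k j1)) (x2 : Fin (k j2)),
              Sum.inr ⟨j1, x1⟩ ∈ L → Sum.inr ⟨j2, x2⟩ ∈ L → (j1 : ℕ) < (j2 : ℕ) →
              ∃ (i0' i1' : Fin t), (i0' : ℕ) < (i1' : ℕ) ∧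
                ∀ (j : Fin t) (x : Fin (k j)), Sum.inr ⟨j, x⟩ ∈ L → j = i0' ∨ j = i1' := by
            intro j1 j2 x1 x2 m1 m2 hlt
            refine ⟨j1, j2, hlt, ?_⟩
            intro j x hm
            by_contra hcon
            push_neg at hcon
            have hne12 : j1 ≠ j2 := fun h => by rw [h] at hlt; omega
            exact hthree j1 j2 j x1 x2 x m1 m2 hm hne12 (Ne.symm hcon.2) (Ne.symm hcon.1)
          rcases Nat.lt_trichotomy (j1 : ℕ) (j2 : ℕ) with h | h | h
          · exact main j1 j2 x1 x2 m1 m2 h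
          · exact absurd (Fin.ext h) hne
          · exact main j2 j1 x2 x1 m2 m1 h
        · push_neg at h2
          rcases Classical.em (∃ (j : Fin t) (x : Fin (k j)), Sum.inr ⟨j, x⟩ ∈ L) with h3 | h3
          · obtain ⟨j0, x0, hm0⟩ := h3
            have hall : ∀ (j : Fin t) (x : Fin (k j)), Sum.inr ⟨j, x⟩ ∈ L → j = j0 :=
              fun j x hm => h2 j j0 x x0 hm hm0
            rcases Nat.eq_zero_or_pos (j0 : ℕ) with hj0 | hj0
            · exact ⟨j0, ⟨1, by omega⟩, by simp [hj0], fun j x hm => Or.inl (hall j x hm)⟩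
            · exact ⟨⟨0, by omega⟩, j0, by simpa using hj0, fun j x hm => Or.inr (hall j x hm)⟩
          · push_neg at h3
            exact ⟨⟨0, by omega⟩, ⟨1, by omega⟩, by simp,
              fun j x hm => absurd hm (h3 j x)⟩
      obtain ⟨i0', i1', hi01, hall⟩ := key
      classical
      have hcard : L.toFinset.card = L.length := List.toFinset_card_of_nodup hndL
      set S1 : Finset (Fin 2 ⊕ Σ i : Fin t, Fin (k i)) :=
        Finset.univ.image (Sum.inl : Fin 2 → _) with hS1
      set S2 : Finset (Fin 2 ⊕ Σ i : Fin t, Fin (k i)) :=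
        Finset.univ.image (fun x : Fin (k i0') => (Sum.inr ⟨i0', x⟩ : Fin 2 ⊕ Σ i : Fin t, Fin (k i))) with hS2
      set S3 : Finset (Fin 2 ⊕ Σ i : Fin t, Fin (k i)) :=
        Finset.univ.image (fun x : Fin (k i1') => (Sum.inr ⟨i1', x⟩ : Fin 2 ⊕ Σ i : Fin t, Fin (k i))) with hS3
      have hsub : L.toFinset ⊆ S1 ∪ (S2 ∪ S3) := by
        intro u hu
        rw [List.mem_toFinset] at hu
        rcases u with zz | ⟨j, x⟩
        · exact Finset.mem_union_left _ (by rw [hS1]; exact Finset.mem_image.mpr ⟨zz, Finset.mem_univ _, rfl⟩)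
        · rcases hall j x hu with rfl | rfl
          · exact Finset.mem_union_right _ (Finset.mem_union_left _
              (by rw [hS2]; exact Finset.mem_image.mpr ⟨x, Finset.mem_univ _, rfl⟩))
          · exact Finset.mem_union_right _ (Finset.mem_union_right _
              (by rw [hS3]; exact Finset.mem_image.mpr ⟨x, Finset.mem_univ _, rfl⟩))
      have hb1 : S1.card ≤ 2 := by
        rw [hS1]; exact le_trans Finset.card_image_le (by simp)
      have hb2 : S2.card ≤ k i0' := by
        rw [hS2]; exact le_trans Finset.card_image_le (by simp)
      have hb3 : S3.card ≤ k i1' := by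
        rw [hS3]; exact le_trans Finset.card_image_le (by simp)
      have hcardle := Finset.card_le_card hsub
      have hU1 := Finset.card_union_le S1 (S2 ∪ S3)
      have hU2 := Finset.card_union_le S2 S3
      have hk0 : k i0' ≤ n₁ := by
        rw [h₁]; exact hanti ⟨0, by omega⟩ i0' (by simp [Fin.le_def])
      have hk1' : k i1' ≤ n₂ := by
        rw [h₂]; exact hanti ⟨1, by omega⟩ i1' (by simp [Fin.le_def]; omega)
      omega
    · push_neg at hinl
      have hchS := SimpleGraph.Walk.isChain_adj_support c
      have h2 : ∀ (j1 j2 : Fin t) (x1 : Fin (k j1)) (x2 : Fin (k j2)),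
          Sum.inr ⟨j1, x1⟩ ∈ c.support → Sum.inr ⟨j2, x2⟩ ∈ c.support → j1 = j2 := by
        intro j1 j2 x1 x2 m1 m2
        by_contra hne
        obtain ⟨z, hzmem⟩ := exists_inl_of_two_comps hchS m1 m2 hne
        exact hinl z hzmem
      have hallr : ∀ u ∈ c.support, ∃ (j : Fin t) (x : Fin (k j)), u = Sum.inr ⟨j, x⟩ := by
        intro u hu
        rcases u with zz | ⟨j, x⟩
        · exact absurd hu (hinl zz)
        · exact ⟨j, x, rfl⟩
      obtain ⟨j0, x0, hj0⟩ := hallr v0 c.start_mem_support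
      set L := c.support.tail with hLdef
      have hndL : L.Nodup := hc.support_nodup
      classical
      have hsub : L.toFinset ⊆
          Finset.univ.image (fun x : Fin (k j0) => (Sum.inr ⟨j0, x⟩ : Fin 2 ⊕ Σ i : Fin t, Fin (k i))) := by
        intro u hu
        rw [List.mem_toFinset] at hu
        have hus : u ∈ c.support := List.mem_of_mem_tail hu
        obtain ⟨j, x, rfl⟩ := hallr u hus
        have hj : j = j0 := h2 j j0 x x0 hus (hj0 ▸ c.start_mem_support)
        subst hj
        exact Finset.mem_image.mpr ⟨x, Finset.mem_univ _, rfl⟩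
      have hcard : L.toFinset.card = L.length := List.toFinset_card_of_nodup hndL
      have hle := Finset.card_le_card hsub
      have him := Finset.card_image_le (s := (Finset.univ : Finset (Fin (k j0))))
        (f := fun x : Fin (k j0) => (Sum.inr ⟨j0, x⟩ : Fin 2 ⊕ Σ i : Fin t, Fin (k i)))
      have hcarduniv : (Finset.univ : Finset (Fin (k j0))).card = k j0 := by simp
      have hlenL : L.length = c.length := by
        rw [hLdef, List.length_tail, SimpleGraph.Walk.length_support]
        omega
      have hk0 : k j0 ≤ n₁ := by
        rw [h₁]; exact hanti ⟨0, by omega⟩ j0 (by simp [Fin.le_def])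
      omega
  exact ⟨partA, ⟨partA (n₁ + n₂ + 2) (by omega) le_rfl, fun m hm => partB m hm⟩⟩
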